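/- Fix r2, r3 > 0. For r1 > 0 and {i,j,k} = {1,2,3}, let θ_i(r1) = arccos[(cosh(r_i + r_j)·cosh(r_i + r_k) − cosh(r_j + r_k)) / (sinh(r_i + r_j)·sinh(r_i + r_k))]. Then the function r1 ↦ θ1(r1)·cosh(r1) + θ2(r1)·cosh(r2) + θ3(r1)·cosh(r3) is strictly decreasing on (0, +∞). -/

import Mathlib

open Real

/-- The inner angle at the center of the circle of radius `ri` in the triangle formed by the
centers of three mutually externally tangent hyperbolic circles of radii `ri`, `rj`, `rk`. -/
noncomputable def innerAngle (ri rj rk : ℝ) : ℝ :=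
  Real.arccos ((Real.cosh (ri + rj) * Real.cosh (ri + rk) - Real.cosh (rj + rk)) /
    (Real.sinh (ri + rj) * Real.sinh (ri + rk)))

private lemma triangle_bounds (p q s : ℝ) (hp : 0 < p) (hq : 0 < q)
    (hpq : |p - q| < s) (hs : s < p + q) :
    -1 < (Real.cosh p * Real.cosh q - Real.cosh s) / (Real.sinh p * Real.sinh q) ∧
      (Real.cosh p * Real.cosh q - Real.cosh s) / (Real.sinh p * Real.sinh q) < 1 := by
  have hd : 0 < Real.sinh p * Real.sinh q :=
    mul_pos (Real.sinh_pos_iff.2 hp) (Real.sinh_pos_iff.2 hq)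
  have hs0 : 0 < s := lt_of_le_of_lt (abs_nonneg _) hpq
  have h1 : Real.cosh (p - q) < Real.cosh s := Real.cosh_lt_cosh.2 (by rwa [abs_of_pos hs0])
  have h2 : Real.cosh s < Real.cosh (p + q) := by
    apply Real.cosh_lt_cosh.2
    rw [abs_of_pos hs0, abs_of_pos (by linarith : (0:ℝ) < p + q)]
    exact hs
  have e1 : Real.cosh (p - q) = Real.cosh p * Real.cosh q - Real.sinh p * Real.sinh q :=
    Real.cosh_sub p q
  have e2 : Real.cosh (p + q) = Real.cosh p * Real.cosh q + Real.sinh p * Real.sinh q :=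
    Real.cosh_add p q
  constructor
  · rw [lt_div_iff₀ hd]
    nlinarith [h2]
  · rw [div_lt_one hd]
    nlinarith [h1]

private lemma arccos_lt_tan_half {y : ℝ} (h1 : -1 < y) (h2 : y < 1) :
    Real.arccos y < 2 * (1 - y) / Real.sqrt (1 - y ^ 2) := by
  set t := Real.arccos y with htdef
  have hcos : Real.cos t = y := Real.cos_arccos h1.le h2.le
  have hsin : Real.sin t = Real.sqrt (1 - y ^ 2) := Real.sin_arccos y
  have ht0 : 0 < t := Real.arccos_pos.2 h2
  have htp : t < π := by
    rcases lt_or_eq_of_le (Real.arccos_le_pi y) with h | h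
    · exact h
    · exfalso
      rw [htdef] at hcos
      rw [h] at hcos
      rw [Real.cos_pi] at hcos
      linarith
  have h0' : 0 < t / 2 := by linarith
  have h2' : t / 2 < π / 2 := by linarith
  have hcpos : 0 < Real.cos (t / 2) :=
    Real.cos_pos_of_mem_Ioo ⟨by linarith [Real.pi_pos], h2'⟩
  have hspos : 0 < Real.sin (t / 2) :=
    Real.sin_pos_of_pos_of_lt_pi h0' (by linarith [Real.pi_pos])
  have hc2 : 1 - Real.cos t = 2 * Real.sin (t / 2) ^ 2 := by
    have h := Real.cos_two_mul (t / 2)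
    have h' := Real.sin_sq_add_cos_sq (t / 2)
    rw [show 2 * (t / 2) = t by ring] at h
    linarith
  have hs2 : Real.sin t = 2 * Real.sin (t / 2) * Real.cos (t / 2) := by
    have h := Real.sin_two_mul (t / 2)
    rwa [show 2 * (t / 2) = t by ring] at h
  have htan : t / 2 < Real.tan (t / 2) := Real.lt_tan h0' h2'
  rw [Real.tan_eq_sin_div_cos] at htan
  have key : t < 2 * (1 - Real.cos t) / Real.sin t := by
    rw [hc2, hs2]
    rw [show 2 * (2 * Real.sin (t / 2) ^ 2) / (2 * Real.sin (t / 2) * Real.cos (t / 2)) =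
        2 * (Real.sin (t / 2) / Real.cos (t / 2)) from by
      field_simp]
    linarith
  rw [hcos, hsin] at key
  exact key

private lemma algebra_E (A shx chx c2 c3 sp sq sa s0 d1 d2 d3 : ℝ)
    (hs0 : s0 ≠ 0) (hsp : sp ≠ 0) (hsq : sq ≠ 0) (hsa : sa ≠ 0) :
    -(1 / (s0 / (sp * sq))) * d1 * chx + A * shx + -(1 / (s0 / (sp * sa))) * d2 * c2 +
        -(1 / (s0 / (sq * sa))) * d3 * c3 =
      shx * A - (d1 * chx * (sp * sq) + d2 * c2 * (sp * sa) + d3 * c3 * (sq * sa)) / s0 := by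
  field_simp
  ring

set_option maxHeartbeats 4000000 in
theorem stmt_13 (r2 r3 : ℝ) (h2 : 0 < r2) (h3 : 0 < r3) :
    StrictAntiOn
      (fun r1 : ℝ =>
        innerAngle r1 r2 r3 * Real.cosh r1 + innerAngle r2 r1 r3 * Real.cosh r2 +
          innerAngle r3 r1 r2 * Real.cosh r3)
      (Set.Ioi 0) := by
  have hfun : (fun r1 : ℝ =>
        innerAngle r1 r2 r3 * Real.cosh r1 + innerAngle r2 r1 r3 * Real.cosh r2 +
          innerAngle r3 r1 r2 * Real.cosh r3) =
      (fun r1 : ℝ =>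
        Real.arccos ((Real.cosh (r1 + r2) * Real.cosh (r1 + r3) - Real.cosh (r2 + r3)) /
            (Real.sinh (r1 + r2) * Real.sinh (r1 + r3))) * Real.cosh r1 +
        Real.arccos ((Real.cosh (r1 + r2) * Real.cosh (r2 + r3) - Real.cosh (r1 + r3)) /
            (Real.sinh (r1 + r2) * Real.sinh (r2 + r3))) * Real.cosh r2 +
        Real.arccos ((Real.cosh (r1 + r3) * Real.cosh (r2 + r3) - Real.cosh (r1 + r2)) /
            (Real.sinh (r1 + r3) * Real.sinh (r2 + r3))) * Real.cosh r3) := by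
    funext y
    simp only [innerAngle]
    rw [add_comm r2 y, add_comm r3 y, add_comm r3 r2]
  rw [hfun]
  have main : ∀ x : ℝ, 0 < x → ∃ yd : ℝ,
      HasDerivAt (fun r1 : ℝ =>
        Real.arccos ((Real.cosh (r1 + r2) * Real.cosh (r1 + r3) - Real.cosh (r2 + r3)) /
            (Real.sinh (r1 + r2) * Real.sinh (r1 + r3))) * Real.cosh r1 +
        Real.arccos ((Real.cosh (r1 + r2) * Real.cosh (r2 + r3) - Real.cosh (r1 + r3)) /
            (Real.sinh (r1 + r2) * Real.sinh (r2 + r3))) * Real.cosh r2 +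
        Real.arccos ((Real.cosh (r1 + r3) * Real.cosh (r2 + r3) - Real.cosh (r1 + r2)) /
            (Real.sinh (r1 + r3) * Real.sinh (r2 + r3))) * Real.cosh r3) yd x ∧ yd < 0 := by
    intro x hx
    have hp2 : (0:ℝ) < x + r2 := by linarith
    have hp3 : (0:ℝ) < x + r3 := by linarith
    have hpa : (0:ℝ) < r2 + r3 := by linarith
    have hsp : 0 < Real.sinh (x + r2) := Real.sinh_pos_iff.2 hp2
    have hsq : 0 < Real.sinh (x + r3) := Real.sinh_pos_iff.2 hp3
    have hsa : 0 < Real.sinh (r2 + r3) := Real.sinh_pos_iff.2 hpa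
    have hspn : Real.sinh (x + r2) ≠ 0 := ne_of_gt hsp
    have hsqn : Real.sinh (x + r3) ≠ 0 := ne_of_gt hsq
    have hsan : Real.sinh (r2 + r3) ≠ 0 := ne_of_gt hsa
    have hb1 := triangle_bounds (x + r2) (x + r3) (r2 + r3) hp2 hp3
      (by rw [abs_lt]; constructor <;> linarith) (by linarith)
    have hb2 := triangle_bounds (x + r2) (r2 + r3) (x + r3) hp2 hpa
      (by rw [abs_lt]; constructor <;> linarith) (by linarith)
    have hb3 := triangle_bounds (x + r3) (r2 + r3) (x + r2) hp3 hpa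
      (by rw [abs_lt]; constructor <;> linarith) (by linarith)
    have hid2 : HasDerivAt (fun y : ℝ => y + r2) 1 x := (hasDerivAt_id x).add_const r2
    have hid3 : HasDerivAt (fun y : ℝ => y + r3) 1 x := (hasDerivAt_id x).add_const r3
    have hcp : HasDerivAt (fun y : ℝ => Real.cosh (y + r2)) (Real.sinh (x + r2) * 1) x :=
      hid2.cosh
    have hsph : HasDerivAt (fun y : ℝ => Real.sinh (y + r2)) (Real.cosh (x + r2) * 1) x :=
      hid2.sinh
    have hcq : HasDerivAt (fun y : ℝ => Real.cosh (y + r3)) (Real.sinh (x + r3) * 1) x :=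
      hid3.cosh
    have hsqh : HasDerivAt (fun y : ℝ => Real.sinh (y + r3)) (Real.cosh (x + r3) * 1) x :=
      hid3.sinh
    have hQ1 : HasDerivAt (fun y : ℝ =>
        (Real.cosh (y + r2) * Real.cosh (y + r3) - Real.cosh (r2 + r3)) /
          (Real.sinh (y + r2) * Real.sinh (y + r3)))
        (((Real.sinh (x + r2) * 1 * Real.cosh (x + r3) +
              Real.cosh (x + r2) * (Real.sinh (x + r3) * 1)) *
            (Real.sinh (x + r2) * Real.sinh (x + r3)) -
          (Real.cosh (x + r2) * Real.cosh (x + r3) - Real.cosh (r2 + r3)) *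
            (Real.cosh (x + r2) * 1 * Real.sinh (x + r3) +
              Real.sinh (x + r2) * (Real.cosh (x + r3) * 1))) /
          (Real.sinh (x + r2) * Real.sinh (x + r3)) ^ 2) x :=
      ((hcp.mul hcq).sub_const _).div (hsph.mul hsqh) (mul_ne_zero hspn hsqn)
    have hQ2 : HasDerivAt (fun y : ℝ =>
        (Real.cosh (y + r2) * Real.cosh (r2 + r3) - Real.cosh (y + r3)) /
          (Real.sinh (y + r2) * Real.sinh (r2 + r3)))
        (((Real.sinh (x + r2) * 1 * Real.cosh (r2 + r3) - Real.sinh (x + r3) * 1) *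
            (Real.sinh (x + r2) * Real.sinh (r2 + r3)) -
          (Real.cosh (x + r2) * Real.cosh (r2 + r3) - Real.cosh (x + r3)) *
            (Real.cosh (x + r2) * 1 * Real.sinh (r2 + r3))) /
          (Real.sinh (x + r2) * Real.sinh (r2 + r3)) ^ 2) x :=
      ((hcp.mul_const _).sub hcq).div (hsph.mul_const _) (mul_ne_zero hspn hsan)
    have hQ3 : HasDerivAt (fun y : ℝ =>
        (Real.cosh (y + r3) * Real.cosh (r2 + r3) - Real.cosh (y + r2)) /
          (Real.sinh (y + r3) * Real.sinh (r2 + r3)))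
        (((Real.sinh (x + r3) * 1 * Real.cosh (r2 + r3) - Real.sinh (x + r2) * 1) *
            (Real.sinh (x + r3) * Real.sinh (r2 + r3)) -
          (Real.cosh (x + r3) * Real.cosh (r2 + r3) - Real.cosh (x + r2)) *
            (Real.cosh (x + r3) * 1 * Real.sinh (r2 + r3))) /
          (Real.sinh (x + r3) * Real.sinh (r2 + r3)) ^ 2) x :=
      ((hcq.mul_const _).sub hcp).div (hsqh.mul_const _) (mul_ne_zero hsqn hsan)
    have harc1 : HasDerivAt (fun y : ℝ =>
        Real.arccos ((Real.cosh (y + r2) * Real.cosh (y + r3) - Real.cosh (r2 + r3)) /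
          (Real.sinh (y + r2) * Real.sinh (y + r3))))
        (-(1 / Real.sqrt (1 - ((Real.cosh (x + r2) * Real.cosh (x + r3) - Real.cosh (r2 + r3)) /
            (Real.sinh (x + r2) * Real.sinh (x + r3))) ^ 2)) *
          (((Real.sinh (x + r2) * 1 * Real.cosh (x + r3) +
              Real.cosh (x + r2) * (Real.sinh (x + r3) * 1)) *
            (Real.sinh (x + r2) * Real.sinh (x + r3)) -
          (Real.cosh (x + r2) * Real.cosh (x + r3) - Real.cosh (r2 + r3)) *
            (Real.cosh (x + r2) * 1 * Real.sinh (x + r3) +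
              Real.sinh (x + r2) * (Real.cosh (x + r3) * 1))) /
          (Real.sinh (x + r2) * Real.sinh (x + r3)) ^ 2)) x :=
      by have h := (Real.hasDerivAt_arccos (ne_of_gt hb1.1) (ne_of_lt hb1.2)).comp x hQ1; exact h
    have harc2 : HasDerivAt (fun y : ℝ =>
        Real.arccos ((Real.cosh (y + r2) * Real.cosh (r2 + r3) - Real.cosh (y + r3)) /
          (Real.sinh (y + r2) * Real.sinh (r2 + r3))))
        (-(1 / Real.sqrt (1 - ((Real.cosh (x + r2) * Real.cosh (r2 + r3) - Real.cosh (x + r3)) /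
            (Real.sinh (x + r2) * Real.sinh (r2 + r3))) ^ 2)) *
          (((Real.sinh (x + r2) * 1 * Real.cosh (r2 + r3) - Real.sinh (x + r3) * 1) *
            (Real.sinh (x + r2) * Real.sinh (r2 + r3)) -
          (Real.cosh (x + r2) * Real.cosh (r2 + r3) - Real.cosh (x + r3)) *
            (Real.cosh (x + r2) * 1 * Real.sinh (r2 + r3))) /
          (Real.sinh (x + r2) * Real.sinh (r2 + r3)) ^ 2)) x :=
      by have h := (Real.hasDerivAt_arccos (ne_of_gt hb2.1) (ne_of_lt hb2.2)).comp x hQ2; exact h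
    have harc3 : HasDerivAt (fun y : ℝ =>
        Real.arccos ((Real.cosh (y + r3) * Real.cosh (r2 + r3) - Real.cosh (y + r2)) /
          (Real.sinh (y + r3) * Real.sinh (r2 + r3))))
        (-(1 / Real.sqrt (1 - ((Real.cosh (x + r3) * Real.cosh (r2 + r3) - Real.cosh (x + r2)) /
            (Real.sinh (x + r3) * Real.sinh (r2 + r3))) ^ 2)) *
          (((Real.sinh (x + r3) * 1 * Real.cosh (r2 + r3) - Real.sinh (x + r2) * 1) *
            (Real.sinh (x + r3) * Real.sinh (r2 + r3)) -
          (Real.cosh (x + r3) * Real.cosh (r2 + r3) - Real.cosh (x + r2)) *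
            (Real.cosh (x + r3) * 1 * Real.sinh (r2 + r3))) /
          (Real.sinh (x + r3) * Real.sinh (r2 + r3)) ^ 2)) x :=
      by have h := (Real.hasDerivAt_arccos (ne_of_gt hb3.1) (ne_of_lt hb3.2)).comp x hQ3; exact h
    refine ⟨_, ((harc1.mul (Real.hasDerivAt_cosh x)).add (harc2.mul_const (Real.cosh r2))).add
      (harc3.mul_const (Real.cosh r3)), ?_⟩
    -- now the sign of the derivative
    have hnum1 : (Real.sinh (x + r2) * Real.sinh (x + r3)) ^ 2 -
        (Real.cosh (x + r2) * Real.cosh (x + r3) - Real.cosh (r2 + r3)) ^ 2 =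
        2 * Real.cosh (r2 + r3) * Real.cosh (x + r2) * Real.cosh (x + r3) -
          Real.cosh (r2 + r3) ^ 2 - Real.cosh (x + r2) ^ 2 - Real.cosh (x + r3) ^ 2 + 1 := by
      rw [mul_pow, Real.sinh_sq, Real.sinh_sq]; ring
    have hnum2 : (Real.sinh (x + r2) * Real.sinh (r2 + r3)) ^ 2 -
        (Real.cosh (x + r2) * Real.cosh (r2 + r3) - Real.cosh (x + r3)) ^ 2 =
        2 * Real.cosh (r2 + r3) * Real.cosh (x + r2) * Real.cosh (x + r3) -
          Real.cosh (r2 + r3) ^ 2 - Real.cosh (x + r2) ^ 2 - Real.cosh (x + r3) ^ 2 + 1 := by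
      rw [mul_pow, Real.sinh_sq, Real.sinh_sq]; ring
    have hnum3 : (Real.sinh (x + r3) * Real.sinh (r2 + r3)) ^ 2 -
        (Real.cosh (x + r3) * Real.cosh (r2 + r3) - Real.cosh (x + r2)) ^ 2 =
        2 * Real.cosh (r2 + r3) * Real.cosh (x + r2) * Real.cosh (x + r3) -
          Real.cosh (r2 + r3) ^ 2 - Real.cosh (x + r2) ^ 2 - Real.cosh (x + r3) ^ 2 + 1 := by
      rw [mul_pow, Real.sinh_sq, Real.sinh_sq]; ring
    have hfrac1 : 1 - ((Real.cosh (x + r2) * Real.cosh (x + r3) - Real.cosh (r2 + r3)) /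
        (Real.sinh (x + r2) * Real.sinh (x + r3))) ^ 2 =
        (2 * Real.cosh (r2 + r3) * Real.cosh (x + r2) * Real.cosh (x + r3) -
          Real.cosh (r2 + r3) ^ 2 - Real.cosh (x + r2) ^ 2 - Real.cosh (x + r3) ^ 2 + 1) /
          (Real.sinh (x + r2) * Real.sinh (x + r3)) ^ 2 := by
      rw [← hnum1]; field_simp
    have hfrac2 : 1 - ((Real.cosh (x + r2) * Real.cosh (r2 + r3) - Real.cosh (x + r3)) /
        (Real.sinh (x + r2) * Real.sinh (r2 + r3))) ^ 2 =
        (2 * Real.cosh (r2 + r3) * Real.cosh (x + r2) * Real.cosh (x + r3) -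
          Real.cosh (r2 + r3) ^ 2 - Real.cosh (x + r2) ^ 2 - Real.cosh (x + r3) ^ 2 + 1) /
          (Real.sinh (x + r2) * Real.sinh (r2 + r3)) ^ 2 := by
      rw [← hnum2]; field_simp
    have hfrac3 : 1 - ((Real.cosh (x + r3) * Real.cosh (r2 + r3) - Real.cosh (x + r2)) /
        (Real.sinh (x + r3) * Real.sinh (r2 + r3))) ^ 2 =
        (2 * Real.cosh (r2 + r3) * Real.cosh (x + r2) * Real.cosh (x + r3) -
          Real.cosh (r2 + r3) ^ 2 - Real.cosh (x + r2) ^ 2 - Real.cosh (x + r3) ^ 2 + 1) /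
          (Real.sinh (x + r3) * Real.sinh (r2 + r3)) ^ 2 := by
      rw [← hnum3]; field_simp
    have h01 : 0 < 1 - ((Real.cosh (x + r2) * Real.cosh (x + r3) - Real.cosh (r2 + r3)) /
        (Real.sinh (x + r2) * Real.sinh (x + r3))) ^ 2 := by
      nlinarith [hb1.1, hb1.2]
    have hV : 0 < 2 * Real.cosh (r2 + r3) * Real.cosh (x + r2) * Real.cosh (x + r3) -
        Real.cosh (r2 + r3) ^ 2 - Real.cosh (x + r2) ^ 2 - Real.cosh (x + r3) ^ 2 + 1 := by
      have h2' : 0 < (2 * Real.cosh (r2 + r3) * Real.cosh (x + r2) * Real.cosh (x + r3) -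
          Real.cosh (r2 + r3) ^ 2 - Real.cosh (x + r2) ^ 2 - Real.cosh (x + r3) ^ 2 + 1) /
          (Real.sinh (x + r2) * Real.sinh (x + r3)) ^ 2 := by
        rw [← hfrac1]; exact h01
      have hd2 : (0:ℝ) < (Real.sinh (x + r2) * Real.sinh (x + r3)) ^ 2 := by positivity
      have := mul_pos h2' hd2
      rwa [div_mul_cancel₀ _ (ne_of_gt hd2)] at this
    have hs0n : Real.sqrt (2 * Real.cosh (r2 + r3) * Real.cosh (x + r2) * Real.cosh (x + r3) -
        Real.cosh (r2 + r3) ^ 2 - Real.cosh (x + r2) ^ 2 - Real.cosh (x + r3) ^ 2 + 1) ≠ 0 :=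
      ne_of_gt (Real.sqrt_pos.2 hV)
    have hS1 : Real.sqrt (1 - ((Real.cosh (x + r2) * Real.cosh (x + r3) - Real.cosh (r2 + r3)) /
        (Real.sinh (x + r2) * Real.sinh (x + r3))) ^ 2) =
        Real.sqrt (2 * Real.cosh (r2 + r3) * Real.cosh (x + r2) * Real.cosh (x + r3) -
          Real.cosh (r2 + r3) ^ 2 - Real.cosh (x + r2) ^ 2 - Real.cosh (x + r3) ^ 2 + 1) /
          (Real.sinh (x + r2) * Real.sinh (x + r3)) := by
      rw [hfrac1, Real.sqrt_div (le_of_lt hV), Real.sqrt_sq (le_of_lt (mul_pos hsp hsq))]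
    have hS2 : Real.sqrt (1 - ((Real.cosh (x + r2) * Real.cosh (r2 + r3) - Real.cosh (x + r3)) /
        (Real.sinh (x + r2) * Real.sinh (r2 + r3))) ^ 2) =
        Real.sqrt (2 * Real.cosh (r2 + r3) * Real.cosh (x + r2) * Real.cosh (x + r3) -
          Real.cosh (r2 + r3) ^ 2 - Real.cosh (x + r2) ^ 2 - Real.cosh (x + r3) ^ 2 + 1) /
          (Real.sinh (x + r2) * Real.sinh (r2 + r3)) := by
      rw [hfrac2, Real.sqrt_div (le_of_lt hV), Real.sqrt_sq (le_of_lt (mul_pos hsp hsa))]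
    have hS3 : Real.sqrt (1 - ((Real.cosh (x + r3) * Real.cosh (r2 + r3) - Real.cosh (x + r2)) /
        (Real.sinh (x + r3) * Real.sinh (r2 + r3))) ^ 2) =
        Real.sqrt (2 * Real.cosh (r2 + r3) * Real.cosh (x + r2) * Real.cosh (x + r3) -
          Real.cosh (r2 + r3) ^ 2 - Real.cosh (x + r2) ^ 2 - Real.cosh (x + r3) ^ 2 + 1) /
          (Real.sinh (x + r3) * Real.sinh (r2 + r3)) := by
      rw [hfrac3, Real.sqrt_div (le_of_lt hV), Real.sqrt_sq (le_of_lt (mul_pos hsq hsa))]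
    have hkey := arccos_lt_tan_half hb1.1 hb1.2
    rw [hS1, div_div_eq_mul_div] at hkey
    have hT : (((Real.sinh (x + r2) * 1 * Real.cosh (x + r3) +
              Real.cosh (x + r2) * (Real.sinh (x + r3) * 1)) *
            (Real.sinh (x + r2) * Real.sinh (x + r3)) -
          (Real.cosh (x + r2) * Real.cosh (x + r3) - Real.cosh (r2 + r3)) *
            (Real.cosh (x + r2) * 1 * Real.sinh (x + r3) +
              Real.sinh (x + r2) * (Real.cosh (x + r3) * 1))) /
          (Real.sinh (x + r2) * Real.sinh (x + r3)) ^ 2) * Real.cosh x *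
          (Real.sinh (x + r2) * Real.sinh (x + r3)) +
        (((Real.sinh (x + r2) * 1 * Real.cosh (r2 + r3) - Real.sinh (x + r3) * 1) *
            (Real.sinh (x + r2) * Real.sinh (r2 + r3)) -
          (Real.cosh (x + r2) * Real.cosh (r2 + r3) - Real.cosh (x + r3)) *
            (Real.cosh (x + r2) * 1 * Real.sinh (r2 + r3))) /
          (Real.sinh (x + r2) * Real.sinh (r2 + r3)) ^ 2) * Real.cosh r2 *
          (Real.sinh (x + r2) * Real.sinh (r2 + r3)) +
        (((Real.sinh (x + r3) * 1 * Real.cosh (r2 + r3) - Real.sinh (x + r2) * 1) *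
            (Real.sinh (x + r3) * Real.sinh (r2 + r3)) -
          (Real.cosh (x + r3) * Real.cosh (r2 + r3) - Real.cosh (x + r2)) *
            (Real.cosh (x + r3) * 1 * Real.sinh (r2 + r3))) /
          (Real.sinh (x + r3) * Real.sinh (r2 + r3)) ^ 2) * Real.cosh r3 *
          (Real.sinh (x + r3) * Real.sinh (r2 + r3)) =
        2 * Real.sinh x *
          (1 - (Real.cosh (x + r2) * Real.cosh (x + r3) - Real.cosh (r2 + r3)) /
            (Real.sinh (x + r2) * Real.sinh (x + r3))) *
          (Real.sinh (x + r2) * Real.sinh (x + r3)) := by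
      field_simp
      simp only [Real.cosh_eq, Real.sinh_eq, Real.exp_add, Real.exp_neg]
      field_simp [Real.exp_ne_zero]
      ring
    rw [hS1, hS2, hS3]
    rw [algebra_E _ _ _ _ _ _ _ _ _ _ _ _ hs0n hspn hsqn hsan]
    rw [hT]
    have hsx : 0 < Real.sinh x := Real.sinh_pos_iff.2 hx
    have hmul := mul_lt_mul_of_pos_left hkey hsx
    have hre : Real.sinh x *
        (2 * (1 - (Real.cosh (x + r2) * Real.cosh (x + r3) - Real.cosh (r2 + r3)) /
            (Real.sinh (x + r2) * Real.sinh (x + r3))) *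
          (Real.sinh (x + r2) * Real.sinh (x + r3)) /
          Real.sqrt (2 * Real.cosh (r2 + r3) * Real.cosh (x + r2) * Real.cosh (x + r3) -
            Real.cosh (r2 + r3) ^ 2 - Real.cosh (x + r2) ^ 2 - Real.cosh (x + r3) ^ 2 + 1)) =
        2 * Real.sinh x *
          (1 - (Real.cosh (x + r2) * Real.cosh (x + r3) - Real.cosh (r2 + r3)) /
            (Real.sinh (x + r2) * Real.sinh (x + r3))) *
          (Real.sinh (x + r2) * Real.sinh (x + r3)) /
          Real.sqrt (2 * Real.cosh (r2 + r3) * Real.cosh (x + r2) * Real.cosh (x + r3) -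
            Real.cosh (r2 + r3) ^ 2 - Real.cosh (x + r2) ^ 2 - Real.cosh (x + r3) ^ 2 + 1) := by
      ring
    linarith [hmul, hre]
  refine strictAntiOn_of_deriv_neg (convex_Ioi 0) ?_ ?_
  · intro x hx
    obtain ⟨yd, hyd, _⟩ := main x hx
    exact hyd.continuousAt.continuousWithinAt
  · intro x hx
    rw [interior_Ioi] at hx
    obtain ⟨yd, hyd, hneg⟩ := main x hx
    rw [hyd.deriv]
    exact hneg
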